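/- For any two involutions v ≤ w in the Bruhat order on S_n, one has ℓ_θ(v) ≤ ℓ_θ(w), where ℓ_θ(y) = (inv(y) + exc(y))/2 is the θ-length. In other words, the θ-length is monotone along the Bruhat order restricted to involutions. -/

import Mathlib

/-- Number of inversions of a permutation of `Fin n`: pairs `i < j` with `w i > w j`. -/
def invNum {n : ℕ} (w : Equiv.Perm (Fin n)) : ℕ :=
  (Finset.univ.filter fun p : Fin n × Fin n => p.1 < p.2 ∧ w p.2 < w p.1).card

/-- Number of excedances of a permutation of `Fin n`: indices `i` with `w i > i`. -/
def excNum {n : ℕ} (w : Equiv.Perm (Fin n)) : ℕ :=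
  (Finset.univ.filter fun i : Fin n => i < w i).card

/-- The θ-length of an involution: `(inv w + exc w) / 2`. -/
def thetaLength {n : ℕ} (w : Equiv.Perm (Fin n)) : ℕ := (invNum w + excNum w) / 2

/-- The Bruhat order on `S_n`, via the rank-matrix characterization:
`u ≤ v` iff for all `i, j`, `#{a ≤ i : u a ≥ j} ≤ #{a ≤ i : v a ≥ j}`. -/
def bruhatLE {n : ℕ} (u v : Equiv.Perm (Fin n)) : Prop :=
  ∀ i j : Fin n,
    (Finset.univ.filter fun a : Fin n => a ≤ i ∧ j ≤ u a).card ≤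
    (Finset.univ.filter fun a : Fin n => a ≤ i ∧ j ≤ v a).card

/-- Strict Bruhat order. -/
def bruhatLT {n : ℕ} (u v : Equiv.Perm (Fin n)) : Prop := bruhatLE u v ∧ u ≠ v

theorem Equiv.Perm.apply_inv_self {α : Type*} (f : Equiv.Perm α) (x : α) : f (f⁻¹ x) = x :=
  Equiv.apply_symm_apply f x

theorem Equiv.Perm.inv_apply_self {α : Type*} (f : Equiv.Perm α) (x : α) : f⁻¹ (f x) = x :=
  Equiv.symm_apply_apply f x

namespace ThetaAux

open Finset Equiv

variable {n : ℕ}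

def N (u : Equiv.Perm (Fin n)) (i j : ℕ) : ℕ :=
  (Finset.univ.filter fun a : Fin n => (a : ℕ) < i ∧ j ≤ (u a : ℕ)).card

def NB (u v : Equiv.Perm (Fin n)) : Prop := ∀ i j : ℕ, N u i j ≤ N v i j

lemma N_row (u : Equiv.Perm (Fin n)) (i j : ℕ) (h : i < n) :
    N u (i+1) j = N u i j + (if j ≤ (u ⟨i, h⟩ : ℕ) then 1 else 0) := by
  classical
  unfold N
  rw [card_filter, card_filter]
  have key : ∀ a : Fin n,
      (if ((a:ℕ) < i+1 ∧ j ≤ (u a : ℕ)) then (1:ℕ) else 0)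
      = (if ((a:ℕ) < i ∧ j ≤ (u a : ℕ)) then 1 else 0)
        + (if a = ⟨i, h⟩ then (if j ≤ (u a : ℕ) then 1 else 0) else 0) := by
    intro a
    have hiff : (a = (⟨i, h⟩ : Fin n)) ↔ ((a:ℕ) = i) := Fin.ext_iff
    split_ifs <;> simp_all <;> omega
  rw [Finset.sum_congr rfl (fun a _ => key a), Finset.sum_add_distrib,
    Finset.sum_ite_eq' Finset.univ (⟨i,h⟩ : Fin n)]
  simp

lemma N_col (u : Equiv.Perm (Fin n)) (i j : ℕ) (h : j < n) :
    N u i j = N u i (j+1) + (if ((u⁻¹ ⟨j, h⟩ : Fin n) : ℕ) < i then 1 else 0) := by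
  classical
  unfold N
  rw [card_filter, card_filter]
  have key : ∀ a : Fin n,
      (if ((a:ℕ) < i ∧ j ≤ (u a : ℕ)) then (1:ℕ) else 0)
      = (if ((a:ℕ) < i ∧ j+1 ≤ (u a : ℕ)) then 1 else 0)
        + (if a = u⁻¹ ⟨j, h⟩ then (if ((a:ℕ) < i) then 1 else 0) else 0) := by
    intro a
    have hiff : (a = u⁻¹ (⟨j, h⟩ : Fin n)) ↔ ((u a : ℕ) = j) := by
      rw [Equiv.Perm.eq_inv_iff_eq, Fin.ext_iff]
    split_ifs <;> simp_all <;> omega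
  rw [Finset.sum_congr rfl (fun a _ => key a), Finset.sum_add_distrib,
    Finset.sum_ite_eq' Finset.univ (u⁻¹ ⟨j,h⟩ : Fin n)]
  have : ((u (u⁻¹ ⟨j,h⟩) : Fin n) : ℕ) = j := by rw [Equiv.Perm.apply_inv_self]
  simp

lemma N_col_ge (u : Equiv.Perm (Fin n)) (i j : ℕ) (h : n ≤ j) : N u i j = 0 := by
  unfold N
  rw [Finset.card_eq_zero]
  apply Finset.filter_false_of_mem
  intro a _
  have := (u a).isLt
  omega

lemma N_row_ge (u : Equiv.Perm (Fin n)) (i j : ℕ) (h : n ≤ i) : N u i j = N u n j := by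
  unfold N
  congr 1
  apply Finset.filter_congr
  intro a _
  have := a.isLt
  constructor <;> intro hh <;> exact ⟨by omega, hh.2⟩

lemma N_full (u v : Equiv.Perm (Fin n)) (j : ℕ) : N u n j = N v n j := by
  unfold N
  apply Finset.card_bij (fun a _ => v⁻¹ (u a))
  · intro a ha
    simp only [mem_filter, mem_univ, true_and] at *
    exact ⟨(v⁻¹ (u a)).isLt, by rw [Equiv.Perm.apply_inv_self]; exact ha.2⟩
  · intro a _ b _ hab
    exact u.injective (v⁻¹.injective hab)
  · intro b hb
    simp only [mem_filter, mem_univ, true_and] at *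
    exact ⟨u⁻¹ (v b), ⟨(u⁻¹ (v b)).isLt, by rw [Equiv.Perm.apply_inv_self]; exact hb.2⟩,
      by rw [Equiv.Perm.apply_inv_self, Equiv.Perm.inv_apply_self]⟩

lemma bruhatLE_NB (u v : Equiv.Perm (Fin n)) (h : bruhatLE u v) : NB u v := by
  intro i j
  rcases le_or_gt n j with hj | hj
  · rw [N_col_ge u i j hj]; exact Nat.zero_le _
  rcases le_or_gt n i with hi | hi
  · rw [N_row_ge u i j hi, N_row_ge v i j hi, N_full u v j]
  rcases Nat.eq_zero_or_pos i with hi0 | hi0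
  · subst hi0
    have : N u 0 j = 0 := by
      unfold N; rw [Finset.card_eq_zero]; apply Finset.filter_false_of_mem
      intro a _ hh; omega
    rw [this]; exact Nat.zero_le _
  · have hi1 : i - 1 < n := by omega
    have := h ⟨i-1, hi1⟩ ⟨j, hj⟩
    have eu : ∀ w : Equiv.Perm (Fin n), N w i j =
        (Finset.univ.filter fun a : Fin n => a ≤ ⟨i-1,hi1⟩ ∧ (⟨j,hj⟩:Fin n) ≤ w a).card := by
      intro w
      unfold N
      congr 1
      apply Finset.filter_congr
      intro a _
      simp only [Fin.le_def]
      constructor <;> intro hh <;> exact ⟨by omega, by omega⟩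
    rw [eu u, eu v]; exact this




section swap
variable (r : ℕ) (hr : r + 1 < n)

def R0 : Fin n := ⟨r, by omega⟩
def R1 : Fin n := ⟨r+1, hr⟩
def sw : Equiv.Perm (Fin n) := Equiv.swap (R0 r hr) (R1 r hr)

variable {r hr}

lemma swap_lt {i j : Fin n} (hij : i < j) (hne : ¬(i = R0 r hr ∧ j = R1 r hr)) :
    sw r hr i < sw r hr j := by
  unfold sw R0 R1 at *
  simp only [Equiv.swap_apply_def]
  split_ifs <;>
    simp only [Fin.lt_def, Fin.ext_iff, Fin.val_mk, not_and] at * <;> omega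

lemma swap_vals (x : Fin n) : sw r hr x = x ∨ ((x:ℕ) = r ∧ ((sw r hr x : Fin n):ℕ) = r+1)
    ∨ ((x:ℕ) = r+1 ∧ ((sw r hr x : Fin n):ℕ) = r) := by
  unfold sw R0 R1
  simp only [Equiv.swap_apply_def]
  split_ifs <;> simp_all [Fin.ext_iff]

lemma sw_R0 : sw r hr (R0 r hr) = R1 r hr := Equiv.swap_apply_left _ _
lemma sw_R1 : sw r hr (R1 r hr) = R0 r hr := Equiv.swap_apply_right _ _
lemma sw_sw : sw r hr * sw r hr = 1 := Equiv.swap_mul_self _ _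
lemma sw_inv : (sw r hr)⁻¹ = sw r hr := Equiv.swap_inv _ _
lemma sw_sw_apply (x : Fin n) : sw r hr (sw r hr x) = x := by
  rw [← Equiv.Perm.mul_apply, sw_sw, Equiv.Perm.one_apply]
lemma sw_apply_ne {x : Fin n} (h0 : x ≠ R0 r hr) (h1 : x ≠ R1 r hr) : sw r hr x = x :=
  Equiv.swap_apply_of_ne_of_ne h0 h1

lemma invNum_inv (u : Equiv.Perm (Fin n)) : invNum u⁻¹ = invNum u := by
  unfold invNum
  apply Finset.card_bij (fun (p : Fin n × Fin n) _ => ((u⁻¹ p.2 : Fin n), (u⁻¹ p.1 : Fin n)))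
  · intro p hp
    simp only [mem_filter, mem_univ, true_and, Equiv.Perm.apply_inv_self] at *
    exact ⟨hp.2, hp.1⟩
  · intro p _ q _ hpq
    have h1 : u⁻¹ p.2 = u⁻¹ q.2 := congrArg Prod.fst hpq
    have h2 : u⁻¹ p.1 = u⁻¹ q.1 := congrArg Prod.snd hpq
    exact Prod.ext (u⁻¹.injective h2) (u⁻¹.injective h1)
  · intro q hq
    simp only [mem_filter, mem_univ, true_and] at *
    refine ⟨(u q.2, u q.1), ⟨hq.2, by simpa using hq.1⟩, ?_⟩
    simp [Equiv.Perm.inv_apply_self]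

/-- right descent: invNum (w * s) + 1 = invNum w -/
lemma invNum_mul_swap (w : Equiv.Perm (Fin n)) (hd : w (R1 r hr) < w (R0 r hr)) :
    invNum (w * sw r hr) + 1 = invNum w := by
  classical
  set s := sw r hr with hs
  set P : Finset (Fin n × Fin n) :=
    Finset.univ.filter fun p : Fin n × Fin n => p.1 < p.2 ∧ w p.2 < w p.1 with hP
  have hmem : ((R0 r hr, R1 r hr) : Fin n × Fin n) ∈ P := by
    simp only [hP, mem_filter, mem_univ, true_and]
    exact ⟨by simp [R0, R1, Fin.lt_def], hd⟩
  have hcard : invNum (w * s) = (P.erase (R0 r hr, R1 r hr)).card := by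
    unfold invNum
    apply Finset.card_bij (fun (p : Fin n × Fin n) _ => ((s p.1 : Fin n), (s p.2 : Fin n)))
    · intro p hp
      simp only [mem_filter, mem_univ, true_and] at hp
      simp only [Equiv.Perm.mul_apply] at hp
      have hpne : ¬(p.1 = R0 r hr ∧ p.2 = R1 r hr) := by
        rintro ⟨h1, h2⟩
        rw [h1, h2, hs, sw_R0, sw_R1] at hp
        exact absurd hp.2 (not_lt.mpr (le_of_lt hd))
      have hlt : s p.1 < s p.2 := swap_lt hp.1 hpne
      rw [Finset.mem_erase]
      constructor
      · intro hc
        have h1 : s p.1 = R0 r hr := congrArg Prod.fst hc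
        have h2 : s p.2 = R1 r hr := congrArg Prod.snd hc
        have e1 : p.1 = R1 r hr := by
          have := congrArg s h1; rwa [hs, sw_sw_apply, sw_R0] at this
        have e2 : p.2 = R0 r hr := by
          have := congrArg s h2; rwa [hs, sw_sw_apply, sw_R1] at this
        have : (p.1 : ℕ) < p.2 := hp.1
        rw [e1, e2] at this
        simp only [R0, R1, Fin.val_mk] at this
        omega
      · simp only [hP, mem_filter, mem_univ, true_and]
        exact ⟨hlt, hp.2⟩
    · intro p _ q _ hpq
      have h1 : s p.1 = s q.1 := congrArg Prod.fst hpq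
      have h2 : s p.2 = s q.2 := congrArg Prod.snd hpq
      exact Prod.ext (s.injective h1) (s.injective h2)
    · intro q hq
      rw [Finset.mem_erase] at hq
      obtain ⟨hqne, hq⟩ := hq
      simp only [hP, mem_filter, mem_univ, true_and] at hq
      have hqne' : ¬(q.1 = R0 r hr ∧ q.2 = R1 r hr) := by
        rintro ⟨h1, h2⟩; exact hqne (Prod.ext h1 h2)
      have hlt : s q.1 < s q.2 := swap_lt hq.1 hqne'
      refine ⟨(s q.1, s q.2), ?_, ?_⟩
      · simp only [mem_filter, mem_univ, true_and]
        simp only [Equiv.Perm.mul_apply]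
        refine ⟨hlt, ?_⟩
        rw [hs, sw_sw_apply, sw_sw_apply]
        exact hq.2
      · simp [hs, sw_sw_apply]
  rw [hcard]
  have : invNum w = P.card := rfl
  rw [this]
  exact Finset.card_erase_add_one hmem

end swap



section swap
variable {r : ℕ} {hr : r + 1 < n}

/-- In the commuting case (w swaps r and r+1), exc drops by 1 on right-multiplying by s. -/
lemma excNum_mul_swap_case (w : Equiv.Perm (Fin n)) (hw0 : w (R0 r hr) = R1 r hr)
    (hw1 : w (R1 r hr) = R0 r hr) :
    excNum (w * sw r hr) + 1 = excNum w := by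
  classical
  have hset : (Finset.univ.filter fun i : Fin n => i < w i)
      = insert (R0 r hr) (Finset.univ.filter fun i : Fin n => i < (w * sw r hr) i) := by
    ext x
    simp only [mem_insert, mem_filter, mem_univ, true_and]
    simp only [Equiv.Perm.mul_apply]
    by_cases h0 : x = R0 r hr
    · subst h0
      simp only [sw_R0, hw0, hw1, true_or, iff_true]
      simp [R0, R1, Fin.lt_def]
    · by_cases h1 : x = R1 r hr
      · subst h1
        rw [sw_R1, hw1, hw0]
        simp only [h0, false_or]
        constructor
        · intro hc; exact absurd hc (by simp [R0, R1, Fin.lt_def])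
        · intro hc; exact absurd hc (by simp [R1, Fin.lt_def])
      · rw [sw_apply_ne h0 h1]
        simp [h0]
  have hnot : (R0 r hr) ∉ (Finset.univ.filter fun i : Fin n => i < (w * sw r hr) i) := by
    simp only [mem_filter, mem_univ, true_and]
    simp only [Equiv.Perm.mul_apply, sw_R0, hw1]
    simp [Fin.lt_def]
  unfold excNum
  rw [hset, Finset.card_insert_of_notMem hnot]

end swap

section exc
/-- For an involution, twice the excedance count is the number of moved points. -/
lemma two_mul_excNum (y : Equiv.Perm (Fin n)) (hy : y * y = 1) :
    2 * excNum y = (Finset.univ.filter fun i : Fin n => y i ≠ i).card := by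
  classical
  have hyy : ∀ x, y (y x) = x := fun x => by
    rw [← Equiv.Perm.mul_apply, hy, Equiv.Perm.one_apply]
  have hsplit : (Finset.univ.filter fun i : Fin n => y i ≠ i)
      = (Finset.univ.filter fun i : Fin n => i < y i)
        ∪ (Finset.univ.filter fun i : Fin n => y i < i) := by
    ext x
    simp only [mem_union, mem_filter, mem_univ, true_and, Fin.lt_def, ne_eq, Fin.ext_iff]
    omega
  have hdisj : Disjoint (Finset.univ.filter fun i : Fin n => i < y i)
      (Finset.univ.filter fun i : Fin n => y i < i) := by
    rw [Finset.disjoint_filter]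
    intro x _ h1 h2
    exact absurd (h1.trans h2) (lt_irrefl x)
  have hcardeq : (Finset.univ.filter fun i : Fin n => i < y i).card
      = (Finset.univ.filter fun i : Fin n => y i < i).card := by
    apply Finset.card_bij (fun a _ => y a)
    · intro a ha
      simp only [mem_filter, mem_univ, true_and] at *
      rwa [hyy]
    · intro a _ b _ hab; exact y.injective hab
    · intro b hb
      simp only [mem_filter, mem_univ, true_and] at *
      exact ⟨y b, by rwa [hyy], hyy b⟩
  rw [hsplit, Finset.card_union_of_disjoint hdisj, ← hcardeq]
  unfold excNum
  omega

lemma moved_card_conj (y c : Equiv.Perm (Fin n)) :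
    (Finset.univ.filter fun i : Fin n => (c * y * c⁻¹) i ≠ i).card
      = (Finset.univ.filter fun i : Fin n => y i ≠ i).card := by
  classical
  apply Finset.card_bij (fun a _ => c⁻¹ a)
  · intro a ha
    simp only [mem_filter, mem_univ, true_and] at *
    simp only [Equiv.Perm.mul_apply] at *
    intro hc
    apply ha
    rw [hc, Equiv.Perm.apply_inv_self]
  · intro a _ b _ hab; exact c⁻¹.injective hab
  · intro b hb
    simp only [mem_filter, mem_univ, true_and] at *
    simp only [Equiv.Perm.mul_apply] at *
    refine ⟨c b, ?_, by rw [Equiv.Perm.inv_apply_self]⟩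
    rw [Equiv.Perm.inv_apply_self]
    intro hc
    exact hb (c.injective hc)

lemma excNum_conj (y c : Equiv.Perm (Fin n)) (hy : y * y = 1) :
    excNum (c * y * c⁻¹) = excNum y := by
  have hconj : (c * y * c⁻¹) * (c * y * c⁻¹) = 1 := by
    have : (c * y * c⁻¹) * (c * y * c⁻¹) = c * (y * y) * c⁻¹ := by group
    rw [this, hy]; group
  have h1 := two_mul_excNum (c * y * c⁻¹) hconj
  have h2 := two_mul_excNum y hy
  have h3 := moved_card_conj y c
  omega

end exc

section lifting
variable {r : ℕ} {hr : r + 1 < n}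

lemma N_row_r0 (u : Equiv.Perm (Fin n)) (j : ℕ) :
    N u (r+1) j = N u r j + (if j ≤ (u (R0 r hr) : ℕ) then 1 else 0) :=
  N_row u r j (by omega)

lemma N_row_r1 (u : Equiv.Perm (Fin n)) (j : ℕ) :
    N u (r+2) j = N u (r+1) j + (if j ≤ (u (R1 r hr) : ℕ) then 1 else 0) :=
  N_row u (r+1) j hr

lemma N_col_r0 (u : Equiv.Perm (Fin n)) (i : ℕ) :
    N u i r = N u i (r+1) + (if ((u⁻¹ (R0 r hr) : Fin n) : ℕ) < i then 1 else 0) :=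
  N_col u i r (by omega)

lemma N_col_r1 (u : Equiv.Perm (Fin n)) (i : ℕ) :
    N u i (r+1) = N u i (r+2) + (if ((u⁻¹ (R1 r hr) : Fin n) : ℕ) < i then 1 else 0) :=
  N_col u i (r+1) hr

lemma N_mul_swap_low (v : Equiv.Perm (Fin n)) (i j : ℕ) (hi : i ≤ r) :
    N (v * sw r hr) i j = N v i j := by
  unfold N
  congr 1
  apply Finset.filter_congr
  intro a _
  by_cases ha : (a : ℕ) < i
  · have h0 : a ≠ R0 r hr := by
      intro h; rw [h] at ha; simp only [R0, Fin.val_mk] at ha; omega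
    have h1 : a ≠ R1 r hr := by
      intro h; rw [h] at ha; simp only [R1, Fin.val_mk] at ha; omega
    simp [Equiv.Perm.mul_apply, sw_apply_ne h0 h1, ha]
  · simp [ha]

lemma N_mul_swap_high (v : Equiv.Perm (Fin n)) (i j : ℕ) (hi : r + 2 ≤ i) :
    N (v * sw r hr) i j = N v i j := by
  unfold N
  apply Finset.card_bij (fun a _ => sw r hr a)
  · intro a ha
    simp only [mem_filter, mem_univ, true_and] at *
    simp only [Equiv.Perm.mul_apply] at *
    constructor
    · rcases swap_vals (r := r) (hr := hr) a with h | ⟨h1, h2⟩ | ⟨h1, h2⟩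
      · rw [h]; exact ha.1
      · omega
      · omega
    · exact ha.2
  · intro a _ b _ hab; exact (sw r hr).injective hab
  · intro b hb
    simp only [mem_filter, mem_univ, true_and] at *
    simp only [Equiv.Perm.mul_apply] at *
    refine ⟨sw r hr b, ⟨?_, by rw [sw_sw_apply]; exact hb.2⟩, sw_sw_apply b⟩
    rcases swap_vals (r := r) (hr := hr) b with h | ⟨h1, h2⟩ | ⟨h1, h2⟩
    · rw [h]; exact hb.1
    · omega
    · omega

lemma N_mul_swap_r1 (v : Equiv.Perm (Fin n)) (j : ℕ) :
    N (v * sw r hr) (r+1) j + (if j ≤ (v (R0 r hr) : ℕ) then 1 else 0)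
      = N v (r+1) j + (if j ≤ (v (R1 r hr) : ℕ) then 1 else 0) := by
  have e1 : N (v * sw r hr) (r+2) j
      = N (v * sw r hr) (r+1) j + (if j ≤ ((v * sw r hr) (R1 r hr) : ℕ) then 1 else 0) :=
    N_row_r1 _ j
  have ev : (v * sw r hr) (R1 r hr) = v (R0 r hr) := by
    rw [Equiv.Perm.mul_apply, sw_R1]
  rw [ev] at e1
  have e2 : N v (r+2) j = N v (r+1) j + (if j ≤ (v (R1 r hr) : ℕ) then 1 else 0) :=
    N_row_r1 v j
  have e3 : N (v * sw r hr) (r+2) j = N v (r+2) j := N_mul_swap_high v (r+2) j le_rfl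
  omega

lemma N_swap_mul_ne (u : Equiv.Perm (Fin n)) (i j : ℕ) (hj : j ≤ r ∨ r + 2 ≤ j) :
    N (sw r hr * u) i j = N u i j := by
  unfold N
  congr 1
  apply Finset.filter_congr
  intro a _
  simp only [Equiv.Perm.mul_apply]
  rcases swap_vals (r := r) (hr := hr) (u a) with h | ⟨h1, h2⟩ | ⟨h1, h2⟩
  · rw [h]
  · constructor <;> intro hh <;> exact ⟨hh.1, by omega⟩
  · constructor <;> intro hh <;> exact ⟨hh.1, by omega⟩

lemma N_swap_mul_r1 (u : Equiv.Perm (Fin n)) (i : ℕ) :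
    N (sw r hr * u) i (r+1) + (if ((u⁻¹ (R1 r hr) : Fin n) : ℕ) < i then 1 else 0)
      = N u i (r+1) + (if ((u⁻¹ (R0 r hr) : Fin n) : ℕ) < i then 1 else 0) := by
  have c1 : N (sw r hr * u) i r = N (sw r hr * u) i (r+1)
      + (if (((sw r hr * u)⁻¹ (R0 r hr) : Fin n) : ℕ) < i then 1 else 0) :=
    N_col_r0 _ i
  have einv : (sw r hr * u)⁻¹ (R0 r hr) = u⁻¹ (R1 r hr) := by
    rw [mul_inv_rev, sw_inv, Equiv.Perm.mul_apply, sw_R0]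
  rw [einv] at c1
  have c2 : N u i r = N u i (r+1)
      + (if ((u⁻¹ (R0 r hr) : Fin n) : ℕ) < i then 1 else 0) := N_col_r0 u i
  have e : N (sw r hr * u) i r = N u i r := N_swap_mul_ne u i r (Or.inl le_rfl)
  omega

lemma lift_right_descent {v w : Equiv.Perm (Fin n)} (hvw : NB v w)
    (hdw : w (R1 r hr) < w (R0 r hr)) (hdv : v (R1 r hr) < v (R0 r hr)) :
    NB (v * sw r hr) (w * sw r hr) := by
  intro i j
  by_cases hi : i ≤ r
  · rw [N_mul_swap_low v i j hi, N_mul_swap_low w i j hi]; exact hvw i j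
  by_cases hi2 : r + 2 ≤ i
  · rw [N_mul_swap_high v i j hi2, N_mul_swap_high w i j hi2]; exact hvw i j
  have hieq : i = r + 1 := by omega
  subst hieq
  have e1 := N_row_r0 (hr := hr) v j
  have e2 := N_row_r1 (hr := hr) v j
  have e3 := N_row_r0 (hr := hr) w j
  have e4 := N_row_r1 (hr := hr) w j
  have f1 := N_mul_swap_r1 (hr := hr) v j
  have f2 := N_mul_swap_r1 (hr := hr) w j
  have h1 := hvw r j
  have h2 := hvw (r+2) j
  have dv : (v (R1 r hr) : ℕ) < (v (R0 r hr) : ℕ) := hdv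
  have dw : (w (R1 r hr) : ℕ) < (w (R0 r hr) : ℕ) := hdw
  split_ifs at e1 e2 e3 e4 f1 f2 <;> omega

lemma lift_right_ascent {v w : Equiv.Perm (Fin n)} (hvw : NB v w)
    (hdw : w (R1 r hr) < w (R0 r hr)) (hav : v (R0 r hr) < v (R1 r hr)) :
    NB v (w * sw r hr) := by
  intro i j
  by_cases hi : i ≤ r
  · rw [N_mul_swap_low w i j hi]; exact hvw i j
  by_cases hi2 : r + 2 ≤ i
  · rw [N_mul_swap_high w i j hi2]; exact hvw i j
  have hieq : i = r + 1 := by omega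
  subst hieq
  have e1 := N_row_r0 (hr := hr) v j
  have e2 := N_row_r1 (hr := hr) v j
  have e3 := N_row_r0 (hr := hr) w j
  have e4 := N_row_r1 (hr := hr) w j
  have f2 := N_mul_swap_r1 (hr := hr) w j
  have h1 := hvw r j
  have h2 := hvw (r+2) j
  have dv : (v (R0 r hr) : ℕ) < (v (R1 r hr) : ℕ) := hav
  have dw : (w (R1 r hr) : ℕ) < (w (R0 r hr) : ℕ) := hdw
  split_ifs at e1 e2 e3 e4 f2 <;> omega

lemma lift_left_descent {x u : Equiv.Perm (Fin n)} (hxu : NB x u)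
    (hdu : u⁻¹ (R1 r hr) < u⁻¹ (R0 r hr)) (hdx : x⁻¹ (R1 r hr) < x⁻¹ (R0 r hr)) :
    NB (sw r hr * x) (sw r hr * u) := by
  intro i j
  by_cases hj : j ≤ r
  · rw [N_swap_mul_ne x i j (Or.inl hj), N_swap_mul_ne u i j (Or.inl hj)]; exact hxu i j
  by_cases hj2 : r + 2 ≤ j
  · rw [N_swap_mul_ne x i j (Or.inr hj2), N_swap_mul_ne u i j (Or.inr hj2)]; exact hxu i j
  have hjeq : j = r + 1 := by omega
  subst hjeq
  have c1 := N_col_r0 (hr := hr) x i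
  have c2 := N_col_r1 (hr := hr) x i
  have c3 := N_col_r0 (hr := hr) u i
  have c4 := N_col_r1 (hr := hr) u i
  have f1 := N_swap_mul_r1 (hr := hr) x i
  have f2 := N_swap_mul_r1 (hr := hr) u i
  have h1 := hxu i r
  have h2 := hxu i (r+2)
  have dx : ((x⁻¹ (R1 r hr) : Fin n) : ℕ) < ((x⁻¹ (R0 r hr) : Fin n) : ℕ) := hdx
  have du : ((u⁻¹ (R1 r hr) : Fin n) : ℕ) < ((u⁻¹ (R0 r hr) : Fin n) : ℕ) := hdu
  split_ifs at c1 c2 c3 c4 f1 f2 <;> omega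

lemma lift_left_ascent {x u : Equiv.Perm (Fin n)} (hxu : NB x u)
    (hdu : u⁻¹ (R1 r hr) < u⁻¹ (R0 r hr)) (hax : x⁻¹ (R0 r hr) < x⁻¹ (R1 r hr)) :
    NB x (sw r hr * u) := by
  intro i j
  by_cases hj : j ≤ r
  · rw [N_swap_mul_ne u i j (Or.inl hj)]; exact hxu i j
  by_cases hj2 : r + 2 ≤ j
  · rw [N_swap_mul_ne u i j (Or.inr hj2)]; exact hxu i j
  have hjeq : j = r + 1 := by omega
  subst hjeq
  have c1 := N_col_r0 (hr := hr) x i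
  have c2 := N_col_r1 (hr := hr) x i
  have c3 := N_col_r0 (hr := hr) u i
  have c4 := N_col_r1 (hr := hr) u i
  have f2 := N_swap_mul_r1 (hr := hr) u i
  have h1 := hxu i r
  have h2 := hxu i (r+2)
  have dx : ((x⁻¹ (R0 r hr) : Fin n) : ℕ) < ((x⁻¹ (R1 r hr) : Fin n) : ℕ) := hax
  have du : ((u⁻¹ (R1 r hr) : Fin n) : ℕ) < ((u⁻¹ (R0 r hr) : Fin n) : ℕ) := hdu
  split_ifs at c1 c2 c3 c4 f2 <;> omega

lemma smul_le {u : Equiv.Perm (Fin n)} (hdu : u⁻¹ (R1 r hr) < u⁻¹ (R0 r hr)) :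
    NB (sw r hr * u) u := by
  intro i j
  by_cases hj : j ≤ r
  · rw [N_swap_mul_ne u i j (Or.inl hj)]
  by_cases hj2 : r + 2 ≤ j
  · rw [N_swap_mul_ne u i j (Or.inr hj2)]
  have hjeq : j = r + 1 := by omega
  subst hjeq
  have f2 := N_swap_mul_r1 (hr := hr) u i
  have du : ((u⁻¹ (R1 r hr) : Fin n) : ℕ) < ((u⁻¹ (R0 r hr) : Fin n) : ℕ) := hdu
  split_ifs at f2 <;> omega

lemma invNum_swap_mul (u : Equiv.Perm (Fin n)) (hdu : u⁻¹ (R1 r hr) < u⁻¹ (R0 r hr)) :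
    invNum (sw r hr * u) + 1 = invNum u := by
  have h1 := invNum_mul_swap (r := r) (hr := hr) u⁻¹ hdu
  have h2 : invNum (u⁻¹ * sw r hr) = invNum (sw r hr * u) := by
    rw [← invNum_inv (sw r hr * u), mul_inv_rev, sw_inv]
  rw [← invNum_inv u]
  omega

end lifting

section main

lemma NB_id {v : Equiv.Perm (Fin n)} (h : NB v 1) : v = 1 := by
  have key : ∀ k : ℕ, ∀ hk : k < n, v ⟨k, hk⟩ = ⟨k, hk⟩ := by
    intro k
    induction k using Nat.strong_induction_on with
    | _ k IH =>
      intro hk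
      have hN1 : N (1 : Equiv.Perm (Fin n)) (k+1) (k+1) = 0 := by
        unfold N
        rw [Finset.card_eq_zero]
        apply Finset.filter_false_of_mem
        intro a _
        simp only [Equiv.Perm.one_apply]
        omega
      have hle := h (k+1) (k+1)
      rw [hN1, Nat.le_zero] at hle
      have hvk : (v ⟨k, hk⟩ : ℕ) ≤ k := by
        by_contra hc
        push_neg at hc
        have hmem : (⟨k, hk⟩ : Fin n) ∈
            (Finset.univ.filter fun a : Fin n => (a : ℕ) < k+1 ∧ k+1 ≤ (v a : ℕ)) := by
          simp only [Finset.mem_filter, Finset.mem_univ, true_and]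
          exact ⟨by omega, by omega⟩
        exact Finset.card_ne_zero_of_mem hmem hle
      rcases Nat.lt_or_ge (v ⟨k, hk⟩ : ℕ) k with hlt | hge
      · exfalso
        set a := v ⟨k, hk⟩ with ha
        have hak : (a : ℕ) < n := a.isLt
        have h1 := IH (a : ℕ) hlt hak
        have heq : (⟨(a : ℕ), hak⟩ : Fin n) = a := rfl
        rw [heq] at h1
        have h2 : v a = v ⟨k, hk⟩ := by rw [h1, ha]
        have h3 := v.injective h2
        have h4 : (a : ℕ) = k := by rw [h3]
        omega
      · exact Fin.ext (le_antisymm hvk hge)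
  apply Equiv.ext
  intro x
  have := key (x : ℕ) x.isLt
  simpa using this

lemma strictMono_le_self {w : Equiv.Perm (Fin n)} (hmono : StrictMono (w : Fin n → Fin n)) :
    ∀ x : Fin n, x ≤ w x := by
  have h1 : ∀ k : ℕ, ∀ hk : k < n, k ≤ (w ⟨k, hk⟩ : ℕ) := by
    intro k
    induction k with
    | zero => intro hk; omega
    | succ k IHk =>
      intro hk
      have hk' : k < n := by omega
      have hlt : w ⟨k, hk'⟩ < w ⟨k+1, hk⟩ := hmono (by simp [Fin.lt_def])
      have hlt' : (w ⟨k, hk'⟩ : ℕ) < (w ⟨k+1, hk⟩ : ℕ) := hlt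
      have := IHk hk'
      omega
  intro x
  have := h1 (x : ℕ) x.isLt
  have hx : (⟨(x : ℕ), x.isLt⟩ : Fin n) = x := rfl
  rw [hx] at this
  exact this

lemma strictMono_eq_one {w : Equiv.Perm (Fin n)} (hmono : StrictMono (w : Fin n → Fin n)) :
    w = 1 := by
  have h1 := strictMono_le_self hmono
  have hmono' : StrictMono (⇑(w⁻¹) : Fin n → Fin n) := by
    intro a b hab
    rcases lt_trichotomy (w⁻¹ a) (w⁻¹ b) with h | h | h
    · exact h
    · exfalso
      have := congrArg w h
      rw [Equiv.Perm.apply_inv_self, Equiv.Perm.apply_inv_self] at this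
      exact absurd this (ne_of_lt hab)
    · exfalso
      have := hmono h
      rw [Equiv.Perm.apply_inv_self, Equiv.Perm.apply_inv_self] at this
      exact absurd hab (not_lt.mpr (le_of_lt this))
  have h2 := strictMono_le_self hmono'
  apply Equiv.ext
  intro x
  have h3 := h2 (w x)
  rw [Equiv.Perm.inv_apply_self] at h3
  exact (le_antisymm (h1 x) h3).symm

lemma exists_descent {w : Equiv.Perm (Fin n)} (hw : w ≠ 1) :
    ∃ (r : ℕ) (hr : r + 1 < n), w (R1 r hr) < w (R0 r hr) := by
  by_contra h
  push_neg at h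
  apply hw
  apply strictMono_eq_one
  have hadj : ∀ (k : ℕ) (hk : k + 1 < n), w ⟨k, by omega⟩ < w ⟨k+1, hk⟩ := by
    intro k hk
    have h0 := h k hk
    have hne : w (R0 k hk) ≠ w (R1 k hk) := by
      intro hc
      have := w.injective hc
      simp only [R0, R1, Fin.ext_iff, Fin.val_mk] at this
      omega
    exact lt_of_le_of_ne h0 hne
  have step : ∀ (d : ℕ) (a : Fin n) (hb : (a : ℕ) + d + 1 < n),
      w a < w ⟨(a : ℕ) + d + 1, hb⟩ := by
    intro d
    induction d with
    | zero =>
      intro a hb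
      have := hadj (a : ℕ) hb
      have ha : (⟨(a : ℕ), by omega⟩ : Fin n) = a := rfl
      rwa [ha] at this
    | succ d IHd =>
      intro a hb
      have h1 := IHd a (by omega)
      have h2 := hadj ((a : ℕ) + d + 1) (by omega)
      exact h1.trans h2
  intro a b hab
  have hab' : (a : ℕ) < (b : ℕ) := hab
  have hblt : (a : ℕ) + ((b : ℕ) - (a : ℕ) - 1) + 1 < n := by
    have := b.isLt; omega
  have hst := step ((b : ℕ) - (a : ℕ) - 1) a hblt
  have hbeq : (⟨(a : ℕ) + ((b : ℕ) - (a : ℕ) - 1) + 1, hblt⟩ : Fin n) = b := Fin.ext (by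
    simp only [Fin.val_mk]; omega)
  rwa [hbeq] at hst

lemma invol_apply {y : Equiv.Perm (Fin n)} (hy : y * y = 1) (x : Fin n) : y (y x) = x := by
  rw [← Equiv.Perm.mul_apply, hy, Equiv.Perm.one_apply]

lemma invol_conj {y c : Equiv.Perm (Fin n)} (hy : y * y = 1) (hc : c * c = 1) :
    (c * y * c) * (c * y * c) = 1 := by
  apply Equiv.ext
  intro x
  simp only [Equiv.Perm.mul_apply, Equiv.Perm.one_apply]
  rw [invol_apply hc, invol_apply hy, invol_apply hc]

lemma invol_inv {y : Equiv.Perm (Fin n)} (hy : y * y = 1) : y⁻¹ = y :=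
  inv_eq_of_mul_eq_one_right hy

lemma NB_trans {a b c : Equiv.Perm (Fin n)} (h1 : NB a b) (h2 : NB b c) : NB a c :=
  fun i j => le_trans (h1 i j) (h2 i j)

/-- For an involution that swaps positions r, r+1, right multiplication by the swap
commutes, and the product is an involution. -/
lemma invol_comm_case {v : Equiv.Perm (Fin n)} {r : ℕ} {hr : r + 1 < n}
    (hv : v * v = 1) (hv0 : v (R0 r hr) = R1 r hr) (hv1 : v (R1 r hr) = R0 r hr) :
    (v * sw r hr) * (v * sw r hr) = 1 := by
  have hvinv := invol_apply hv
  have hvcomm : ∀ x, v (sw r hr x) = sw r hr (v x) := by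
    intro x
    by_cases h0 : x = R0 r hr
    · subst h0; rw [sw_R0, hv1, hv0, sw_R1]
    by_cases h1 : x = R1 r hr
    · subst h1; rw [sw_R1, hv0, hv1, sw_R0]
    · have hv0' : v x ≠ R0 r hr := by
        intro hc
        have : x = v (R0 r hr) := by rw [← hc, hvinv]
        rw [hv0] at this; exact h1 this
      have hv1'' : v x ≠ R1 r hr := by
        intro hc
        have : x = v (R1 r hr) := by rw [← hc, hvinv]
        rw [hv1] at this; exact h0 this
      rw [sw_apply_ne h0 h1, sw_apply_ne hv0' hv1'']
  apply Equiv.ext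
  intro x
  simp only [Equiv.Perm.mul_apply, Equiv.Perm.one_apply]
  rw [hvcomm, hvinv]
  exact sw_sw_apply x

/-- main induction -/
lemma key_lemma (m : ℕ) : ∀ (w v : Equiv.Perm (Fin n)), invNum w ≤ m → v * v = 1 →
    w * w = 1 → NB v w → invNum v + excNum v ≤ invNum w + excNum w := by
  induction m using Nat.strong_induction_on with
  | _ m IH =>
    intro w v hm hv hw hvw
    by_cases hw1 : w = 1
    · subst hw1
      rw [NB_id hvw]
    obtain ⟨r, hr, hd⟩ := exists_descent hw1
    have hss : sw r hr * sw r hr = 1 := sw_sw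
    have hvne : v (R0 r hr) ≠ v (R1 r hr) := by
      intro hc
      have := v.injective hc
      simp only [R0, R1, Fin.ext_iff, Fin.val_mk] at this
      omega
    have hiw := invNum_mul_swap (r := r) (hr := hr) w hd
    by_cases hcw : w (R0 r hr) = R1 r hr ∧ w (R1 r hr) = R0 r hr
    · -- Case A : w' = w * s
      obtain ⟨hw0, hw1'⟩ := hcw
      have hws_inv : (w * sw r hr) * (w * sw r hr) = 1 := invol_comm_case hw hw0 hw1'
      have hexcw := excNum_mul_swap_case (r := r) (hr := hr) w hw0 hw1'
      have hws_lt : invNum (w * sw r hr) < m := by omega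
      by_cases hdv : v (R1 r hr) < v (R0 r hr)
      · have hiv := invNum_mul_swap (r := r) (hr := hr) v hdv
        have hlift1 : NB (v * sw r hr) (w * sw r hr) := lift_right_descent hvw hd hdv
        by_cases hcv : v (R0 r hr) = R1 r hr ∧ v (R1 r hr) = R0 r hr
        · -- v' = v * s
          obtain ⟨hv0, hv1⟩ := hcv
          have hvs_inv : (v * sw r hr) * (v * sw r hr) = 1 := invol_comm_case hv hv0 hv1
          have hexcv := excNum_mul_swap_case (r := r) (hr := hr) v hv0 hv1
          have := IH (invNum (w * sw r hr)) hws_lt (w * sw r hr) (v * sw r hr) le_rfl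
            hvs_inv hws_inv hlift1
          omega
        · -- v' = s * v * s
          have hsvlt : sw r hr (v (R1 r hr)) < sw r hr (v (R0 r hr)) :=
            swap_lt hdv (fun hc => hcv ⟨hc.2, hc.1⟩)
          have hvsinv_eq : (v * sw r hr)⁻¹ = sw r hr * v := by
            rw [mul_inv_rev, invol_inv hv, sw_inv]
          have hldv : (v * sw r hr)⁻¹ (R1 r hr) < (v * sw r hr)⁻¹ (R0 r hr) := by
            rw [hvsinv_eq]
            simpa only [Equiv.Perm.mul_apply] using hsvlt
          have hiv2 := invNum_swap_mul (r := r) (hr := hr) (v * sw r hr) hldv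
          have hassoc : sw r hr * (v * sw r hr) = sw r hr * v * sw r hr :=
            (mul_assoc _ v _).symm
          rw [hassoc] at hiv2
          have hv'inv : (sw r hr * v * sw r hr) * (sw r hr * v * sw r hr) = 1 :=
            invol_conj hv hss
          have hexc' : excNum (sw r hr * v * sw r hr) = excNum v := by
            have h0 := excNum_conj v (sw r hr) hv
            rw [show sw r hr * v * (sw r hr)⁻¹ = sw r hr * v * sw r hr by rw [sw_inv]] at h0
            exact h0
          have hsm : NB (sw r hr * (v * sw r hr)) (v * sw r hr) := smul_le hldv
          have hchain : NB (sw r hr * v * sw r hr) (w * sw r hr) := by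
            rw [← hassoc]
            exact NB_trans hsm hlift1
          have := IH (invNum (w * sw r hr)) hws_lt (w * sw r hr) (sw r hr * v * sw r hr)
            le_rfl hv'inv hws_inv hchain
          omega
      · -- v ascent
        have hav : v (R0 r hr) < v (R1 r hr) := lt_of_le_of_ne (not_lt.mp hdv) hvne
        have hlift : NB v (w * sw r hr) := lift_right_ascent hvw hd hav
        have := IH (invNum (w * sw r hr)) hws_lt (w * sw r hr) v le_rfl hv hws_inv hlift
        omega
    · -- Case B : w' = s * w * s
      have hswlt : sw r hr (w (R1 r hr)) < sw r hr (w (R0 r hr)) :=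
        swap_lt hd (fun hc => hcw ⟨hc.2, hc.1⟩)
      have hwsinv_eq : (w * sw r hr)⁻¹ = sw r hr * w := by
        rw [mul_inv_rev, invol_inv hw, sw_inv]
      have hldw : (w * sw r hr)⁻¹ (R1 r hr) < (w * sw r hr)⁻¹ (R0 r hr) := by
        rw [hwsinv_eq]
        simpa only [Equiv.Perm.mul_apply] using hswlt
      have hiw2 := invNum_swap_mul (r := r) (hr := hr) (w * sw r hr) hldw
      have hassocw : sw r hr * (w * sw r hr) = sw r hr * w * sw r hr :=
        (mul_assoc _ w _).symm
      rw [hassocw] at hiw2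
      have hw'inv : (sw r hr * w * sw r hr) * (sw r hr * w * sw r hr) = 1 :=
        invol_conj hw hss
      have hexcw' : excNum (sw r hr * w * sw r hr) = excNum w := by
        have h0 := excNum_conj w (sw r hr) hw
        rw [show sw r hr * w * (sw r hr)⁻¹ = sw r hr * w * sw r hr by rw [sw_inv]] at h0
        exact h0
      have hw'_lt : invNum (sw r hr * w * sw r hr) < m := by omega
      by_cases hdv : v (R1 r hr) < v (R0 r hr)
      · have hiv := invNum_mul_swap (r := r) (hr := hr) v hdv
        have hlift1 : NB (v * sw r hr) (w * sw r hr) := lift_right_descent hvw hd hdv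
        by_cases hcv : v (R0 r hr) = R1 r hr ∧ v (R1 r hr) = R0 r hr
        · -- v' = v * s, a left-ascent
          obtain ⟨hv0, hv1⟩ := hcv
          have hvsinv_eq : (v * sw r hr)⁻¹ = sw r hr * v := by
            rw [mul_inv_rev, invol_inv hv, sw_inv]
          have hax : (v * sw r hr)⁻¹ (R0 r hr) < (v * sw r hr)⁻¹ (R1 r hr) := by
            rw [hvsinv_eq]
            have e0 : (sw r hr * v) (R0 r hr) = R0 r hr := by
              rw [Equiv.Perm.mul_apply, hv0, sw_R1]
            have e1 : (sw r hr * v) (R1 r hr) = R1 r hr := by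
              rw [Equiv.Perm.mul_apply, hv1, sw_R0]
            rw [e0, e1]
            simp only [R0, R1, Fin.lt_def, Fin.val_mk]
            omega
          have hlift2 : NB (v * sw r hr) (sw r hr * (w * sw r hr)) :=
            lift_left_ascent hlift1 hldw hax
          rw [hassocw] at hlift2
          have hvs_inv : (v * sw r hr) * (v * sw r hr) = 1 := invol_comm_case hv hv0 hv1
          have hexcv := excNum_mul_swap_case (r := r) (hr := hr) v hv0 hv1
          have := IH (invNum (sw r hr * w * sw r hr)) hw'_lt (sw r hr * w * sw r hr)
            (v * sw r hr) le_rfl hvs_inv hw'inv hlift2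
          omega
        · -- v' = s * v * s
          have hsvlt : sw r hr (v (R1 r hr)) < sw r hr (v (R0 r hr)) :=
            swap_lt hdv (fun hc => hcv ⟨hc.2, hc.1⟩)
          have hvsinv_eq : (v * sw r hr)⁻¹ = sw r hr * v := by
            rw [mul_inv_rev, invol_inv hv, sw_inv]
          have hldv : (v * sw r hr)⁻¹ (R1 r hr) < (v * sw r hr)⁻¹ (R0 r hr) := by
            rw [hvsinv_eq]
            simpa only [Equiv.Perm.mul_apply] using hsvlt
          have hiv2 := invNum_swap_mul (r := r) (hr := hr) (v * sw r hr) hldv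
          have hassocv : sw r hr * (v * sw r hr) = sw r hr * v * sw r hr :=
            (mul_assoc _ v _).symm
          rw [hassocv] at hiv2
          have hv'inv : (sw r hr * v * sw r hr) * (sw r hr * v * sw r hr) = 1 :=
            invol_conj hv hss
          have hexc' : excNum (sw r hr * v * sw r hr) = excNum v := by
            have h0 := excNum_conj v (sw r hr) hv
            rw [show sw r hr * v * (sw r hr)⁻¹ = sw r hr * v * sw r hr by rw [sw_inv]] at h0
            exact h0
          have hlift2 : NB (sw r hr * (v * sw r hr)) (sw r hr * (w * sw r hr)) :=
            lift_left_descent hlift1 hldw hldv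
          rw [hassocw, hassocv] at hlift2
          have := IH (invNum (sw r hr * w * sw r hr)) hw'_lt (sw r hr * w * sw r hr)
            (sw r hr * v * sw r hr) le_rfl hv'inv hw'inv hlift2
          omega
      · -- v ascent
        have hav : v (R0 r hr) < v (R1 r hr) := lt_of_le_of_ne (not_lt.mp hdv) hvne
        have hlift1 : NB v (w * sw r hr) := lift_right_ascent hvw hd hav
        have hax : v⁻¹ (R0 r hr) < v⁻¹ (R1 r hr) := by
          rw [invol_inv hv]
          exact hav
        have hlift2 : NB v (sw r hr * (w * sw r hr)) := lift_left_ascent hlift1 hldw hax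
        rw [hassocw] at hlift2
        have := IH (invNum (sw r hr * w * sw r hr)) hw'_lt (sw r hr * w * sw r hr) v
          le_rfl hv hw'inv hlift2
        omega

end main

end ThetaAux

/-- The θ-length is monotone along the Bruhat order restricted to involutions:
if `v ≤ w` in Bruhat order and both are involutions, then `ℓ_θ(v) ≤ ℓ_θ(w)`. -/
theorem thetaLength_monotone_bruhat {n : ℕ} (v w : Equiv.Perm (Fin n))
    (hv : v * v = 1) (hw : w * w = 1) (h : bruhatLE v w) :
    thetaLength v ≤ thetaLength w := by
  have h' := ThetaAux.bruhatLE_NB v w h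
  have hmain := ThetaAux.key_lemma (invNum w) w v le_rfl hv hw h'
  unfold thetaLength
  exact Nat.div_le_div_right hmain
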